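/- arXiv:2404.07670 — 4 statements merged into one kernel-verified Lean document; each statement's English description precedes it below -/
import Mathlib

section
/- Let q = 4, s ≥ 1, let v be the Helberg weight sequence v_i = 0 for i ≤ 0 and v_i = 1 + 3·∑_{j=1}^{s} v_{i−j}, and define C_{2k} = 2·v_k, C_{2k−1} = v_k. Then for every natural number L ≥ 1, C_L − ∑_{i=L−s}^{L−1} C_i ≥ 1, where C_i is taken as 0 whenever i ≤ 0. -/
open Finset


private lemma stmt4_split (f : ℤ → ℤ) (a b : ℤ) (h : a ≤ b) :
    ∑ i ∈ Icc a b, f i = ∑ i ∈ Icc a (b - 1), f i + f b := by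
  have hIco : Ico a b = Icc a (b - 1) := by
    ext i; simp only [Finset.mem_Ico, Finset.mem_Icc]; omega
  rw [Finset.Icc_eq_cons_Ico h, Finset.sum_cons, hIco]
  ring

private lemma stmt4_pair (s' : ℕ) (v C : ℤ → ℕ)
    (hCe' : ∀ k : ℤ, C (2 * k) = 2 * v k)
    (hCo' : ∀ k : ℤ, C (2 * k - 1) = v k) :
    ∀ n : ℕ, ∀ k : ℤ,
      ∑ i ∈ Icc (2 * k - 2 * (n : ℤ) - 1) (2 * k - 2), (C i : ℤ)
        = 3 * ∑ j ∈ range n, (v (k - 1 - j) : ℤ) := by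
  intro n
  induction n with
  | zero =>
      intro k
      rw [Finset.Icc_eq_empty (by push_cast; omega)]
      simp
  | succ n ih =>
      intro k
      push_cast
      rw [show (2 * k - 2 * ((n:ℤ) + 1) - 1) = 2 * (k - 1) - 2 * (n:ℤ) - 1 by ring,
        stmt4_split (fun i => (C i : ℤ)) _ _ (by omega),
        stmt4_split (fun i => (C i : ℤ)) _ _ (by omega),
        show (2 * k - 2 - 1 - 1 : ℤ) = 2 * (k - 1) - 2 by ring]
      rw [ih (k - 1)]
      rw [show (2 * k - 2 - 1 : ℤ) = 2 * (k - 1) - 1 by ring,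
        show (2 * k - 2 : ℤ) = 2 * (k - 1) by ring,
        hCe' (k - 1), hCo' (k - 1)]
      rw [Finset.sum_range_succ' (fun j : ℕ => (v (k - 1 - j) : ℤ)) n]
      push_cast
      have : ∀ j : ℕ, (k - 1 - ((j : ℤ) + 1)) = k - 1 - 1 - j := by intro j; ring
      simp only [this, sub_zero]
      ring

theorem stmt_4 (s : ℕ) (hs : 1 ≤ s) (v C : ℤ → ℕ)
    (hv0 : ∀ i : ℤ, i ≤ 0 → v i = 0)
    (hv : ∀ i : ℤ, 1 ≤ i → v i = 1 + 3 * ∑ j ∈ Finset.range s, v (i - 1 - j))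
    (hC0 : ∀ i : ℤ, i ≤ 0 → C i = 0)
    (hCe : ∀ k : ℤ, 1 ≤ k → C (2 * k) = 2 * v k)
    (hCo : ∀ k : ℤ, 1 ≤ k → C (2 * k - 1) = v k) :
    ∀ L : ℤ, 1 ≤ L →
      1 ≤ (C L : ℤ) - ∑ i ∈ Finset.Icc (L - (s : ℤ)) (L - 1), (C i : ℤ) := by
  have hCe' : ∀ k : ℤ, C (2 * k) = 2 * v k := by
    intro k
    rcases le_or_gt k 0 with h | h
    · rw [hC0 _ (by linarith), hv0 _ h]
    · exact hCe k h
  have hCo' : ∀ k : ℤ, C (2 * k - 1) = v k := by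
    intro k
    rcases le_or_gt k 0 with h | h
    · rw [hC0 _ (by linarith), hv0 _ h]
    · exact hCo k h
  have pair := stmt4_pair s v C hCe' hCo'
  -- key bound: the sum over any subinterval of Icc (2k-2s-1) (2k-2) is ≤ v k - 1
  have key : ∀ k : ℤ, 1 ≤ k → ∀ a : ℤ, 2 * k - 2 * (s : ℤ) - 1 ≤ a →
      ∑ i ∈ Icc a (2 * k - 2), (C i : ℤ) ≤ (v k : ℤ) - 1 := by
    intro k hk a ha
    have hsub : Icc a (2 * k - 2) ⊆ Icc (2 * k - 2 * (s : ℤ) - 1) (2 * k - 2) :=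
      Finset.Icc_subset_Icc_left ha
    have hmono : ∑ i ∈ Icc a (2 * k - 2), (C i : ℤ)
        ≤ ∑ i ∈ Icc (2 * k - 2 * (s : ℤ) - 1) (2 * k - 2), (C i : ℤ) :=
      Finset.sum_le_sum_of_subset_of_nonneg hsub (fun i _ _ => by positivity)
    have hvk : (v k : ℤ) = 1 + 3 * ∑ j ∈ range s, (v (k - 1 - j) : ℤ) := by
      have := hv k hk
      push_cast [this]
      ring
    rw [pair s k] at hmono
    linarith
  intro L hL
  rcases Int.even_or_odd L with ⟨k, hk⟩ | ⟨k, hk⟩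
  · -- L = 2k
    have hLk : L = 2 * k := by omega
    have hk1 : 1 ≤ k := by omega
    subst hLk
    have hsplit : ∑ i ∈ Icc (2 * k - (s : ℤ)) (2 * k - 1), (C i : ℤ)
        = ∑ i ∈ Icc (2 * k - (s : ℤ)) (2 * k - 2), (C i : ℤ) + (C (2 * k - 1) : ℤ) := by
      rw [stmt4_split (fun i => (C i : ℤ)) _ _ (by omega),
        show (2 * k - 1 - 1 : ℤ) = 2 * k - 2 by ring]
    rw [hsplit, hCe' k, hCo' k]
    have := key k hk1 (2 * k - (s : ℤ)) (by omega)
    push_cast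
    linarith
  · -- L = 2k + 1 = 2(k+1) - 1
    have hLk : L = 2 * (k + 1) - 1 := by omega
    have hk1 : 1 ≤ k + 1 := by omega
    subst hLk
    rw [hCo' (k + 1)]
    have := key (k + 1) hk1 (2 * (k + 1) - 1 - (s : ℤ)) (by omega)
    have e : (2 * (k + 1) - 1 - 1 : ℤ) = 2 * (k + 1) - 2 := by ring
    rw [e]
    linarith
end

section
/- Let v be the Helberg weight sequence for q = 4, s ≥ 1, and define C_{2k} = 2·v_k, C_{2k−1} = v_k for k ≥ 1 (C_i = 0 for i ≤ 0). Then for every even L ≥ 2, v_{L/2} = 1 + ∑_{i = L−2s−1}^{L−2} C_i, where terms with nonpositive index are 0. -/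
theorem stmt_8 (s : ℕ) (hs : 1 ≤ s) (v C : ℤ → ℕ)
    (hv0 : ∀ i : ℤ, i ≤ 0 → v i = 0)
    (hv : ∀ i : ℤ, 1 ≤ i → v i = 1 + 3 * ∑ j ∈ Finset.range s, v (i - 1 - j))
    (hC0 : ∀ i : ℤ, i ≤ 0 → C i = 0)
    (hCe : ∀ k : ℤ, 1 ≤ k → C (2 * k) = 2 * v k)
    (hCo : ∀ k : ℤ, 1 ≤ k → C (2 * k - 1) = v k) :
    ∀ L : ℤ, 2 ≤ L → Even L →
      v (L / 2) = 1 + ∑ i ∈ Finset.Icc (L - 2 * (s : ℤ) - 1) (L - 2), C i := by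
  have hCe' : ∀ k : ℤ, C (2 * k) = 2 * v k := by
    intro k
    rcases le_or_gt 1 k with h | h
    · exact hCe k h
    · rw [hC0 _ (by omega), hv0 _ (by omega)]
  have hCo' : ∀ k : ℤ, C (2 * k - 1) = v k := by
    intro k
    rcases le_or_gt 1 k with h | h
    · exact hCo k h
    · rw [hC0 _ (by omega), hv0 _ (by omega)]
  have main : ∀ (t : ℕ) (m : ℤ),
      ∑ i ∈ Finset.Icc (2 * m - 2 * (t : ℤ) - 1) (2 * m - 2), C i
        = 3 * ∑ j ∈ Finset.range t, v (m - 1 - j) := by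
    intro t
    induction t with
    | zero =>
      intro m
      rw [Finset.Icc_eq_empty (by omega)]
      simp
    | succ t ih =>
      intro m
      have hset : Finset.Icc (2 * m - 2 * ((t : ℤ) + 1) - 1) (2 * m - 2)
          = insert (2 * m - 2 * (t : ℤ) - 3)
              (insert (2 * m - 2 * (t : ℤ) - 2)
                (Finset.Icc (2 * m - 2 * (t : ℤ) - 1) (2 * m - 2))) := by
        ext i
        simp only [Finset.mem_Icc, Finset.mem_insert]
        omega
      have h1 : (2 * m - 2 * (t : ℤ) - 3) ∉
          insert (2 * m - 2 * (t : ℤ) - 2)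
            (Finset.Icc (2 * m - 2 * (t : ℤ) - 1) (2 * m - 2)) := by
        simp only [Finset.mem_Icc, Finset.mem_insert]
        omega
      have h2 : (2 * m - 2 * (t : ℤ) - 2) ∉
          Finset.Icc (2 * m - 2 * (t : ℤ) - 1) (2 * m - 2) := by
        simp only [Finset.mem_Icc]
        omega
      push_cast [hset, Finset.sum_insert h1, Finset.sum_insert h2, ih,
        Finset.sum_range_succ]
      have e1 : 2 * m - 2 * (t : ℤ) - 3 = 2 * (m - 1 - t) - 1 := by ring
      have e2 : 2 * m - 2 * (t : ℤ) - 2 = 2 * (m - 1 - t) := by ring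
      rw [e1, e2, hCo', hCe']
      ring
  intro L hL hLe
  obtain ⟨m, hm⟩ := hLe
  have hm2 : L = 2 * m := by omega
  have hdiv : L / 2 = m := by omega
  have hm1 : (1 : ℤ) ≤ m := by omega
  rw [hdiv, hv m hm1, hm2, main s m]
end

section
/- Let v be the Helberg weight sequence for q = 4, s ≥ 1, and define C_{2k} = 2·v_k, C_{2k−1} = v_k for k ≥ 1 (C_i = 0 for i ≤ 0). Then for every odd L ≥ 1, v_{(L+1)/2} = 1 + ∑_{i = L−2s}^{L−1} C_i, where terms with nonpositive index are 0. -/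
theorem stmt_9 (s : ℕ) (hs : 1 ≤ s) (v C : ℤ → ℕ)
    (hv0 : ∀ i : ℤ, i ≤ 0 → v i = 0)
    (hv : ∀ i : ℤ, 1 ≤ i → v i = 1 + 3 * ∑ j ∈ Finset.range s, v (i - 1 - j))
    (hC0 : ∀ i : ℤ, i ≤ 0 → C i = 0)
    (hCe : ∀ k : ℤ, 1 ≤ k → C (2 * k) = 2 * v k)
    (hCo : ∀ k : ℤ, 1 ≤ k → C (2 * k - 1) = v k) :
    ∀ L : ℤ, 1 ≤ L → Odd L →
      v ((L + 1) / 2) = 1 + ∑ i ∈ Finset.Icc (L - 2 * (s : ℤ)) (L - 1), C i := by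
  have hpair : ∀ k : ℤ, C (2 * k - 1) + C (2 * k) = 3 * v k := by
    intro k
    rcases le_or_gt k 0 with h | h
    · rw [hC0 _ (by omega), hC0 _ (by omega), hv0 _ h]
    · rw [hCo _ h, hCe _ h]; ring
  have key : ∀ t : ℕ, ∀ m : ℤ,
      ∑ i ∈ Finset.Icc (2 * m - 1) (2 * m - 2 + 2 * (t : ℤ)), C i
        = 3 * ∑ j ∈ Finset.range t, v (m + j) := by
    intro t
    induction t with
    | zero =>
        intro m
        rw [Finset.Icc_eq_empty (by push_cast; omega)]
        simp
    | succ t ih =>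
        intro m
        push_cast
        have hset : Finset.Icc (2 * m - 1) (2 * m - 2 + 2 * ((t : ℤ) + 1))
            = insert (2 * (m + t)) (insert (2 * (m + t) - 1)
                (Finset.Icc (2 * m - 1) (2 * m - 2 + 2 * (t : ℤ)))) := by
          ext x
          simp only [Finset.mem_Icc, Finset.mem_insert]
          omega
        rw [hset, Finset.sum_insert (by
            simp only [Finset.mem_insert, Finset.mem_Icc]; omega),
          Finset.sum_insert (by simp only [Finset.mem_Icc]; omega),
          ih m, Finset.sum_range_succ]
        have := hpair (m + t)
        omega
  intro L hL hodd
  obtain ⟨k, hk⟩ := hodd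
  have hm2 : (L + 1) / 2 = k + 1 := by omega
  rw [hm2, hv (k + 1) (by omega),
    show L - 2 * (s : ℤ) = 2 * (k + 1 - s) - 1 by omega,
    show L - 1 = 2 * (k + 1 - s) - 2 + 2 * (s : ℤ) by omega,
    key s (k + 1 - s)]
  have hrefl : ∑ j ∈ Finset.range s, v (k + 1 - 1 - j)
      = ∑ j ∈ Finset.range s, v (k + 1 - s + j) := by
    rw [← Finset.sum_range_reflect (fun j => v (k + 1 - s + j)) s]
    apply Finset.sum_congr rfl
    intro j hj
    simp only [Finset.mem_range] at hj
    congr 1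
    omega
  rw [hrefl]
end

section
/- Let q = 4, s ≥ 1, n ≥ 1, a ∈ Z, and let H(n,4,s,a) = { x ∈ Z4^n : ∑ v_i x_i ≡ a (mod m) } be the quaternary Helberg code with modulus m = v_{n+1}. Let φ(0)=(1,1), φ(1)=(0,1), φ(2)=(1,0), φ(3)=(0,0) extended componentwise. If x, y ∈ Z4^n are such that the binary images X = φ(x), Y = φ(y) ∈ {0,1}^{2n} have a common subsequence of length 2n − (s+1) (i.e., X^D = Y^E for some deletion index sets D, E of size s+1) and x ≠ y, then 0 < |M(x) − M(y)| < m, where M(z) = ∑_{i=1}^n v_i z_i; consequently x and y lie in different Helberg codes, and φ(H(n,4,s,a)) is an (s+1)-deletion correcting binary code. -/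
/-- The componentwise image of a quaternary word under
φ: 0↦(1,1), 1↦(0,1), 2↦(1,0), 3↦(0,0), as a binary list of length 2n. -/
def phiList {n : ℕ} (x : Fin n → Fin 4) : List ℕ :=
  (List.ofFn fun i =>
    if (x i : ℕ) = 0 then [1, 1]
    else if (x i : ℕ) = 1 then [0, 1]
    else if (x i : ℕ) = 2 then [1, 0]
    else [0, 0]).flatten

/-- The Helberg moment `M(x) = ∑_{i=1}^n v_i x_i`. -/
def moment (v : ℤ → ℕ) {n : ℕ} (x : Fin n → Fin 4) : ℤ :=
  ∑ i : Fin n, (v ((i : ℕ) + 1) : ℤ) * ((x i : ℕ) : ℤ)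



namespace HelbergAux

/-- Weight of a reversed word: head gets weight `w (length)`. -/
def Wt (w : ℕ → ℕ) : List ℕ → ℕ
  | [] => 0
  | b :: L => b * w (L.length + 1) + Wt w L

def topSum (w : ℕ → ℕ) (t N : ℕ) : ℕ := ∑ j ∈ Finset.range t, w (N - j)

lemma topSum_succ (w : ℕ → ℕ) (t N : ℕ) :
    topSum w (t+1) (N+1) = w (N+1) + topSum w t N := by
  unfold topSum
  rw [Finset.sum_range_succ']
  simp [Nat.succ_sub_succ, add_comm]

lemma topSum_succ' (w : ℕ → ℕ) (t N : ℕ) :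
    topSum w (t+1) (N+1) = topSum w t (N+1) + w (N+1-t) := by
  unfold topSum
  rw [Finset.sum_range_succ]

lemma topSum_mono_t (w : ℕ → ℕ) {t t' : ℕ} (h : t ≤ t') (N : ℕ) :
    topSum w t N ≤ topSum w t' N :=
  Finset.sum_le_sum_of_subset (Finset.range_subset_range.2 h)

lemma Wt_le_of_sublist (w : ℕ → ℕ) (hmono : Monotone w) {Z Y : List ℕ}
    (h : Z.Sublist Y) : Wt w Z ≤ Wt w Y := by
  induction h with
  | slnil => exact le_rfl
  | cons b h ih => exact ih.trans (by simp [Wt])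
  | @cons_cons Z' Y' a h ih =>
      simp only [Wt]
      have h1 : Z'.length ≤ Y'.length := h.length_le
      have : w (Z'.length + 1) ≤ w (Y'.length + 1) := hmono (by omega)
      have : a * w (Z'.length + 1) ≤ a * w (Y'.length + 1) := Nat.mul_le_mul_left _ this
      omega

lemma Wt_upper (w : ℕ → ℕ) (hmono : Monotone w) {Z X : List ℕ} (h : Z.Sublist X)
    (hbin : ∀ b ∈ X, b ≤ 1) :
    Wt w X ≤ Wt w Z + topSum w (X.length - Z.length) X.length := by
  induction h with
  | slnil => simp [Wt, topSum]
  | @cons Z X' b h ih =>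
      have hZ : Z.length ≤ X'.length := h.length_le
      have ht : (b :: X').length - Z.length = (X'.length - Z.length) + 1 := by
        simp; omega
      rw [ht]
      have hb : b ≤ 1 := hbin b (by simp)
      have hbw : b * w (X'.length + 1) ≤ w (X'.length + 1) := by
        calc b * w (X'.length + 1) ≤ 1 * w (X'.length + 1) :=
          Nat.mul_le_mul_right _ hb
        _ = _ := one_mul _
      have ih' := ih (fun c hc => hbin c (by simp [hc]))
      have hts : topSum w ((X'.length - Z.length) + 1) (X'.length + 1)
          = w (X'.length + 1) + topSum w (X'.length - Z.length) X'.length :=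
        topSum_succ w _ _
      simp only [Wt, List.length_cons]
      omega
  | @cons_cons Z X' a h ih =>
      have hZ : Z.length ≤ X'.length := h.length_le
      have ha : a ≤ 1 := hbin a (by simp)
      have ih' := ih (fun c hc => hbin c (by simp [hc]))
      have hlen2 : (a :: X').length - (a :: Z).length = X'.length - Z.length := by simp
      rw [hlen2]
      simp only [Wt, List.length_cons]
      have key : topSum w (X'.length - Z.length) X'.length + w (X'.length + 1)
          = topSum w (X'.length - Z.length) (X'.length + 1)
            + w (X'.length + 1 - (X'.length - Z.length)) := by
        rw [add_comm (topSum w _ X'.length), ← topSum_succ w _ X'.length, topSum_succ']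
      have hzz : Z.length + 1 = X'.length + 1 - (X'.length - Z.length) := by omega
      rw [hzz]
      have hmw : w (X'.length + 1 - (X'.length - Z.length)) ≤ w (X'.length + 1) :=
        hmono (by omega)
      rcases Nat.le_one_iff_eq_zero_or_eq_one.mp ha with rfl | rfl <;> simp <;> omega

lemma sublist_drop_of_sublist_append (A : List ℕ) :
    ∀ (Z U : List ℕ), Z.Sublist (A ++ U) → (Z.drop A.length).Sublist U := by
  induction A with
  | nil => intro Z U h; simpa using h
  | cons a A' ih =>
      intro Z U h
      rw [List.cons_append, List.sublist_cons_iff] at h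
      rcases h with h' | ⟨Z', rfl, h'⟩
      · have h2 := ih Z U h'
        have hd : Z.drop (A'.length + 1) = (Z.drop A'.length).drop 1 := by
          rw [List.drop_drop]
        rw [List.length_cons, hd]
        exact (List.drop_sublist 1 _).trans h2
      · rw [List.length_cons, List.drop_succ_cons]
        exact ih Z' U h'

lemma Wt_append_sub (w : ℕ → ℕ) (C : List ℕ) :
    ∀ (R R' : List ℕ), R.length = R'.length →
    (Wt w (C ++ R) : ℤ) - Wt w (C ++ R') = (Wt w R : ℤ) - Wt w R' := by
  induction C with
  | nil => intro R R' _; simp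
  | cons c C' ih =>
      intro R R' h
      simp only [List.cons_append, Wt, List.append_eq, List.length_append, h]
      push_cast
      have := ih R R' h
      linarith

lemma exists_first_diff : ∀ (X Y : List ℕ), X.length = Y.length → X ≠ Y →
    ∃ C a b X₂ Y₂, X = C ++ a :: X₂ ∧ Y = C ++ b :: Y₂ ∧ a ≠ b ∧ X₂.length = Y₂.length := by
  intro X
  induction X with
  | nil =>
      intro Y h hne
      cases Y with
      | nil => exact absurd rfl hne
      | cons _ _ => simp at h
  | cons x X' ih =>
      intro Y h hne
      cases Y with
      | nil => simp at h
      | cons y Y' =>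
          by_cases hxy : x = y
          · subst hxy
            have hne' : X' ≠ Y' := fun e => hne (by rw [e])
            obtain ⟨C, a, b, X₂, Y₂, h1, h2, h3, h4⟩ := ih Y' (by simpa using h) hne'
            exact ⟨x :: C, a, b, X₂, Y₂, by simp [h1], by simp [h2], h3, h4⟩
          · exact ⟨[], x, y, X', Y', rfl, rfl, hxy, by simpa using h⟩

end HelbergAux


namespace HelbergAux

/-- Binary weight sequence: `w(2i-1) = v i`, `w(2i) = 2 v i`. -/
def wtF (v : ℤ → ℕ) (m : ℕ) : ℕ :=
  if m % 2 = 1 then v (((m+1)/2 : ℕ) : ℤ) else 2 * v ((m/2 : ℕ) : ℤ)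

lemma wtF_odd (v : ℤ → ℕ) (i : ℕ) : wtF v (2*i+1) = v ((i:ℤ)+1) := by
  have h1 : (2*i+1) % 2 = 1 := by omega
  have h2 : (2*i+1+1)/2 = i + 1 := by omega
  rw [wtF, if_pos h1, h2]
  push_cast
  ring_nf

lemma wtF_even (v : ℤ → ℕ) (i : ℕ) : wtF v (2*i) = 2 * v (i:ℤ) := by
  have h1 : ¬ (2*i) % 2 = 1 := by omega
  have h2 : (2*i)/2 = i := by omega
  rw [wtF, if_neg h1, h2]

variable {v : ℤ → ℕ} {s : ℕ}

section
variable (hs : 1 ≤ s)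
    (hv0 : ∀ i : ℤ, i ≤ 0 → v i = 0)
    (hv : ∀ i : ℤ, 1 ≤ i → v i = 1 + 3 * ∑ j ∈ Finset.range s, v (i - 1 - j))
include hs hv0 hv
set_option linter.unusedSectionVars false

lemma two_v_le (i : ℕ) : 2 * v i ≤ v ((i : ℤ) + 1) := by
  have h := hv ((i : ℤ) + 1) (by omega)
  have hmem : (0 : ℕ) ∈ Finset.range s := Finset.mem_range.2 hs
  have hle : v ((i:ℤ) + 1 - 1 - ((0:ℕ):ℤ)) ≤ ∑ j ∈ Finset.range s, v ((i:ℤ) + 1 - 1 - j) :=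
    Finset.single_le_sum (f := fun j : ℕ => v ((i:ℤ) + 1 - 1 - j))
      (fun j _ => Nat.zero_le _) hmem
  have h0 : v ((i:ℤ) + 1 - 1 - ((0:ℕ):ℤ)) = v i := by norm_num
  omega

lemma wtF_mono : Monotone (wtF v) := by
  apply monotone_nat_of_le_succ
  intro m
  rcases Nat.even_or_odd m with ⟨i, rfl⟩ | ⟨i, rfl⟩
  · have e1 : i + i = 2 * i := by ring
    rw [e1, wtF_even v, wtF_odd v]
    exact two_v_le hs hv0 hv i
  · have e1 : 2*i+1+1 = 2*(i+1) := by ring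
    rw [wtF_odd v, e1, wtF_even v]
    have e2 : ((i:ℤ)+1) = ((i+1 : ℕ) : ℤ) := by push_cast; ring
    rw [e2]
    omega

lemma pair_bound (i a : ℕ) :
    wtF v (2*i - 2*a) + wtF v (2*i - (2*a+1)) ≤ 3 * v ((i:ℤ) - a) := by
  rcases lt_or_ge a i with hlt | hge
  · set d := i - a with hd
    have hd1 : 1 ≤ d := by omega
    have e1 : 2*i - 2*a = 2*d := by omega
    have e2 : 2*i - (2*a+1) = 2*(d-1)+1 := by omega
    rw [e1, e2, wtF_even v, wtF_odd v]
    have e4 : (((d-1 : ℕ)):ℤ) + 1 = (d:ℤ) := by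
      have : ((d:ℤ)) - 1 = ((d-1:ℕ):ℤ) := by push_cast [hd1]; ring
      omega
    have e5 : ((i:ℤ) - a) = (d:ℤ) := by push_cast [hd]; omega
    rw [e4, e5]
    omega
  · have e1 : 2*i - 2*a = 0 := by omega
    have e2 : 2*i - (2*a+1) = 0 := by omega
    have e3 : wtF v 0 = 0 := by
      rw [show (0:ℕ) = 2*0 from rfl, wtF_even v]
      simp [hv0 0 le_rfl]
    rw [e1, e2, e3]
    simp

lemma sum_pair_bound (t i : ℕ) :
    ∑ j ∈ Finset.range (2*t), wtF v (2*i - j) ≤ 3 * ∑ a ∈ Finset.range t, v ((i:ℤ) - a) := by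
  induction t with
  | zero => simp
  | succ t ih =>
      have e1 : 2*(t+1) = (2*t+1)+1 := by ring
      rw [e1, Finset.sum_range_succ, Finset.sum_range_succ, Finset.sum_range_succ]
      have hp := pair_bound hs hv0 hv i t
      omega

end
end HelbergAux

namespace HelbergAux
section
variable {v : ℤ → ℕ} {s : ℕ}
variable (hs : 1 ≤ s)
    (hv0 : ∀ i : ℤ, i ≤ 0 → v i = 0)
    (hv : ∀ i : ℤ, 1 ≤ i → v i = 1 + 3 * ∑ j ∈ Finset.range s, v (i - 1 - j))
include hs hv0 hv
set_option linter.unusedSectionVars false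

lemma v_succ (i : ℕ) : v ((i:ℤ)+1) = 1 + 3 * ∑ a ∈ Finset.range s, v ((i:ℤ) - a) := by
  rw [hv ((i:ℤ)+1) (by omega)]
  congr 1
  apply congrArg
  exact Finset.sum_congr rfl (fun j _ => by ring_nf)

lemma key_ineq (k : ℕ) :
    1 + ∑ j ∈ Finset.range (s+1), wtF v (k - j) ≤ wtF v (k+1) := by
  rcases Nat.even_or_odd k with ⟨i, hk⟩ | ⟨i, hk⟩
  · have hk2 : k = 2*i := by omega
    subst hk2
    have h1 : ∑ j ∈ Finset.range (s+1), wtF v (2*i - j)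
        ≤ ∑ j ∈ Finset.range (2*s), wtF v (2*i - j) :=
      Finset.sum_le_sum_of_subset (Finset.range_subset_range.2 (by omega))
    have h2 := sum_pair_bound hs hv0 hv s i
    have h3 : wtF v (2*i+1) = v ((i:ℤ)+1) := wtF_odd v i
    have h4 := v_succ hs hv0 hv i
    omega
  · have hk2 : k = 2*i+1 := by omega
    subst hk2
    have h0 : ∑ j ∈ Finset.range (s+1), wtF v (2*i+1 - j)
        = ∑ j ∈ Finset.range s, wtF v (2*i - j) + wtF v (2*i+1) := by
      rw [Finset.sum_range_succ']
      simp only [Nat.sub_zero]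
      congr 1
      exact Finset.sum_congr rfl (fun j _ => by
        have e : 2*i+1-(j+1) = 2*i - j := by omega
        rw [e])
    have h1 : ∑ j ∈ Finset.range s, wtF v (2*i - j)
        ≤ ∑ j ∈ Finset.range (2*s), wtF v (2*i - j) :=
      Finset.sum_le_sum_of_subset (Finset.range_subset_range.2 (by omega))
    have h2 := sum_pair_bound hs hv0 hv s i
    have h3 : wtF v (2*i+1) = v ((i:ℤ)+1) := wtF_odd v i
    have h5 : wtF v (2*i+1+1) = 2 * v ((i:ℤ)+1) := by
      have e : 2*i+1+1 = 2*(i+1) := by ring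
      rw [e, wtF_even v]
      push_cast
      ring
    have h4 := v_succ hs hv0 hv i
    omega

end
end HelbergAux

namespace HelbergAux

def blk (c : ℕ) : List ℕ :=
  if c = 0 then [1, 1] else if c = 1 then [0, 1] else if c = 2 then [1, 0] else [0, 0]

lemma phiList_eq {n : ℕ} (x : Fin n → Fin 4) :
    phiList x = (List.ofFn fun i => blk ((x i : ℕ))).flatten := rfl

lemma blk_length (c : ℕ) : (blk c).length = 2 := by
  unfold blk; split_ifs <;> rfl

lemma blk_mem_le_one (c : ℕ) : ∀ b ∈ blk c, b ≤ 1 := by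
  unfold blk; split_ifs <;> simp

lemma phiList_length {n : ℕ} (x : Fin n → Fin 4) : (phiList x).length = 2 * n := by
  rw [phiList_eq, List.length_flatten, List.map_ofFn]
  have : (List.ofFn ((fun L => L.length) ∘ fun i => blk ((x i : ℕ)))) = List.ofFn (fun _ : Fin n => 2) := by
    congr 1
    funext i
    exact blk_length _
  rw [this]
  simp [List.sum_ofFn, mul_comm]

lemma phiList_mem_le_one {n : ℕ} (x : Fin n → Fin 4) : ∀ b ∈ phiList x, b ≤ 1 := by
  intro b hb
  rw [phiList_eq, List.mem_flatten] at hb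
  obtain ⟨L, hL, hbL⟩ := hb
  rw [List.mem_ofFn] at hL
  obtain ⟨i, rfl⟩ := hL
  exact blk_mem_le_one _ b hbL

lemma flatten_getD_two (l : List (List ℕ)) (h : ∀ L ∈ l, L.length = 2) :
    ∀ i r, r < 2 → i < l.length → l.flatten.getD (2*i + r) 0 = (l.getD i []).getD r 0 := by
  induction l with
  | nil => intro i r _ hi; simp at hi
  | cons L l' ih =>
      intro i r hr hi
      have hL2 : L.length = 2 := h L (by simp)
      rw [List.flatten_cons]
      cases i with
      | zero =>
          simp only [Nat.mul_zero, Nat.zero_add]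
          rw [List.getD_append _ _ _ _ (by omega)]
          rfl
      | succ i' =>
          rw [List.getD_append_right _ _ _ _ (by omega)]
          have e : 2*(i'+1) + r - L.length = 2*i' + r := by omega
          rw [e]
          have := ih (fun L hL => h L (by simp [hL])) i' r hr (by simpa using hi)
          rw [this]
          rfl

lemma phiList_getD {n : ℕ} (x : Fin n → Fin 4) (i : ℕ) (hi : i < n) (r : ℕ) (hr : r < 2) :
    (phiList x).getD (2*i + r) 0 = (blk ((x ⟨i, hi⟩ : ℕ))).getD r 0 := by
  rw [phiList_eq]
  rw [flatten_getD_two _ (by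
    intro L hL
    rw [List.mem_ofFn] at hL
    obtain ⟨j, rfl⟩ := hL
    exact blk_length _) i r hr (by simpa using hi)]
  congr 1
  rw [List.getD_eq_getElem _ _ (by simpa using hi), List.getElem_ofFn]

end HelbergAux
namespace HelbergAux

lemma Wt_eq_sum (w : ℕ → ℕ) (L : List ℕ) :
    Wt w L = ∑ k ∈ Finset.range L.length, L.getD k 0 * w (L.length - k) := by
  induction L with
  | nil => simp [Wt]
  | cons b L' ih =>
      rw [List.length_cons, Finset.sum_range_succ']
      simp only [List.getD_cons_succ, List.getD_cons_zero, Nat.sub_zero]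
      have e : ∀ k, L'.length + 1 - (k+1) = L'.length - k := fun k => by omega
      simp only [e]
      rw [Wt, ih]
      omega

lemma Wt_reverse (w : ℕ → ℕ) (B : List ℕ) :
    Wt w B.reverse = ∑ k ∈ Finset.range B.length, B.getD k 0 * w (k+1) := by
  rw [Wt_eq_sum, List.length_reverse]
  rw [← Finset.sum_range_reflect (fun k => B.getD k 0 * w (k+1)) B.length]
  apply Finset.sum_congr rfl
  intro k hk
  rw [Finset.mem_range] at hk
  have h1 : B.reverse.getD k 0 = B.getD (B.length - 1 - k) 0 := by
    rw [List.getD_eq_getElem _ _ (by simpa using hk),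
        List.getD_eq_getElem _ _ (by omega)]
    exact List.getElem_reverse _
  have e2 : B.length - 1 - k + 1 = B.length - k := by omega
  rw [h1, e2]

lemma sum_range_pair (f : ℕ → ℕ) (n : ℕ) :
    ∑ k ∈ Finset.range (2*n), f k = ∑ i ∈ Finset.range n, (f (2*i) + f (2*i+1)) := by
  induction n with
  | zero => simp
  | succ n ih =>
      have e : 2*(n+1) = (2*n+1)+1 := by ring
      rw [e, Finset.sum_range_succ, Finset.sum_range_succ, Finset.sum_range_succ, ih]
      omega

end HelbergAux
namespace HelbergAux

lemma wtF_even' (v : ℤ → ℕ) (i : ℕ) : wtF v (2*i+1+1) = 2 * v ((i:ℤ)+1) := by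
  have e : 2*i+1+1 = 2*(i+1) := by ring
  rw [e, wtF_even v]
  push_cast
  ring

lemma moment_add_Wt (v : ℤ → ℕ) {n : ℕ} (x : Fin n → Fin 4) :
    moment v x + (Wt (wtF v) (phiList x).reverse : ℤ)
      = ∑ i : Fin n, 3 * (v (((i:ℕ):ℤ)+1) : ℤ) := by
  have h1 : Wt (wtF v) (phiList x).reverse
      = ∑ i ∈ Finset.range n, ((phiList x).getD (2*i) 0 * wtF v (2*i+1)
          + (phiList x).getD (2*i+1) 0 * wtF v (2*i+1+1)) := by
    rw [Wt_reverse, phiList_length, sum_range_pair]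
  rw [h1, moment, Finset.sum_range]
  push_cast
  rw [← Finset.sum_add_distrib]
  apply Finset.sum_congr rfl
  intro i _
  have hgd0 := phiList_getD x (i:ℕ) i.isLt 0 (by omega)
  have hgd1 := phiList_getD x (i:ℕ) i.isLt 1 (by omega)
  rw [Nat.add_zero] at hgd0
  simp only [Fin.eta] at hgd0 hgd1
  rw [hgd0, hgd1, wtF_odd, wtF_even' v]
  have hc : (x i : ℕ) = 0 ∨ (x i : ℕ) = 1 ∨ (x i : ℕ) = 2 ∨ (x i : ℕ) = 3 := by
    have := (x i).isLt; omega
  rcases hc with hc | hc | hc | hc <;> rw [hc] <;> simp [blk] <;> push_cast <;> ring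

lemma phiList_inj {n : ℕ} (x y : Fin n → Fin 4) (h : phiList x = phiList y) : x = y := by
  funext i
  have e0 : (blk ((x i : ℕ))).getD 0 0 = (blk ((y i : ℕ))).getD 0 0 := by
    have a0 := phiList_getD x (i:ℕ) i.isLt 0 (by omega)
    have b0 := phiList_getD y (i:ℕ) i.isLt 0 (by omega)
    simp only [Fin.eta] at a0 b0
    rw [← a0, ← b0, h]
  have e1 : (blk ((x i : ℕ))).getD 1 0 = (blk ((y i : ℕ))).getD 1 0 := by
    have a1 := phiList_getD x (i:ℕ) i.isLt 1 (by omega)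
    have b1 := phiList_getD y (i:ℕ) i.isLt 1 (by omega)
    simp only [Fin.eta] at a1 b1
    rw [← a1, ← b1, h]
  have hval : (x i : ℕ) = (y i : ℕ) := by
    have hx : (x i : ℕ) = 0 ∨ (x i : ℕ) = 1 ∨ (x i : ℕ) = 2 ∨ (x i : ℕ) = 3 := by
      have := (x i).isLt; omega
    have hy : (y i : ℕ) = 0 ∨ (y i : ℕ) = 1 ∨ (y i : ℕ) = 2 ∨ (y i : ℕ) = 3 := by
      have := (y i).isLt; omega
    rcases hx with hx | hx | hx | hx <;> rcases hy with hy | hy | hy | hy <;>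
      rw [hx, hy] at e0 e1 ⊢ <;> simp [blk] at e0 e1 ⊢
  exact Fin.val_injective hval

end HelbergAux
namespace HelbergAux

lemma abs_bound (w : ℕ → ℕ) (hmono : Monotone w) {Z X Y : List ℕ}
    (hbinX : ∀ b ∈ X, b ≤ 1) (hbinY : ∀ b ∈ Y, b ≤ 1) (hlen : X.length = Y.length)
    (hZX : Z.Sublist X) (hZY : Z.Sublist Y) :
    |(Wt w X : ℤ) - Wt w Y| ≤ (topSum w (X.length - Z.length) X.length : ℤ) := by
  have h1 := Wt_upper w hmono hZX hbinX
  have h2 := Wt_upper w hmono hZY hbinY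
  have h3 := Wt_le_of_sublist w hmono hZY
  have h4 := Wt_le_of_sublist w hmono hZX
  rw [← hlen] at h2
  rw [abs_le]
  constructor <;> omega

section
variable {v : ℤ → ℕ} {s : ℕ}
variable (hs : 1 ≤ s)
    (hv0 : ∀ i : ℤ, i ≤ 0 → v i = 0)
    (hv : ∀ i : ℤ, 1 ≤ i → v i = 1 + 3 * ∑ j ∈ Finset.range s, v (i - 1 - j))
include hs hv0 hv
set_option linter.unusedSectionVars false

lemma sign_lemma (C X₂ Y₂ Z : List ℕ) (hlen : X₂.length = Y₂.length)
    (hbinX : ∀ b ∈ C ++ 1 :: X₂, b ≤ 1) (hbinY : ∀ b ∈ C ++ 0 :: Y₂, b ≤ 1)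
    (hZX : Z.Sublist (C ++ 1 :: X₂)) (hZY : Z.Sublist (C ++ 0 :: Y₂))
    (hcnt : Z.length + (s+1) = (C ++ 1 :: X₂).length) :
    (Wt (wtF v) (C ++ 0 :: Y₂) : ℤ) < Wt (wtF v) (C ++ 1 :: X₂) := by
  have hmono : Monotone (wtF v) := wtF_mono hs hv0 hv
  set w := wtF v with hwdef
  have hsub : (Wt w (C ++ 1 :: X₂) : ℤ) - Wt w (C ++ 0 :: Y₂)
      = (Wt w (1 :: X₂) : ℤ) - Wt w (0 :: Y₂) :=
    Wt_append_sub w C _ _ (by simp [hlen])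
  have hW1 : Wt w (1 :: X₂) = w (X₂.length + 1) + Wt w X₂ := by simp [Wt]
  have hW0 : Wt w (0 :: Y₂) = Wt w Y₂ := by simp [Wt]
  set Z' := Z.drop (C.length + 1) with hZ'def
  have hZX' : Z'.Sublist X₂ := by
    have h' : Z.Sublist ((C ++ [1]) ++ X₂) := by simpa using hZX
    have := sublist_drop_of_sublist_append (C ++ [1]) Z X₂ h'
    simpa using this
  have hZY' : Z'.Sublist Y₂ := by
    have h' : Z.Sublist ((C ++ [0]) ++ Y₂) := by simpa using hZY
    have := sublist_drop_of_sublist_append (C ++ [0]) Z Y₂ h'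
    simpa using this
  have habs := abs_bound w hmono
    (fun b hb => hbinX b (by simp [hb])) (fun b hb => hbinY b (by simp [hb]))
    hlen hZX' hZY'
  have hlZ' : Z'.length = Z.length - (C.length + 1) := by
    rw [hZ'def, List.length_drop]
  have hlX : (C ++ 1 :: X₂).length = C.length + 1 + X₂.length := by simp; omega
  have hZle : Z'.length ≤ X₂.length := hZX'.length_le
  have ht2 : X₂.length - Z'.length ≤ s + 1 := by omega
  have hts : topSum w (X₂.length - Z'.length) X₂.length ≤ topSum w (s+1) X₂.length :=
    topSum_mono_t w ht2 _
  have hkey : 1 + topSum w (s+1) X₂.length ≤ w (X₂.length + 1) :=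
    key_ineq hs hv0 hv X₂.length
  rw [abs_le] at habs
  omega

end
end HelbergAux

open HelbergAux in
theorem stmt_19 (s n : ℕ) (hs : 1 ≤ s) (hn : 1 ≤ n) (v : ℤ → ℕ)
    (hv0 : ∀ i : ℤ, i ≤ 0 → v i = 0)
    (hv : ∀ i : ℤ, 1 ≤ i → v i = 1 + 3 * ∑ j ∈ Finset.range s, v (i - 1 - j)) :
    (∀ x y : Fin n → Fin 4, x ≠ y →
      (∃ w : List ℕ, w.length + (s + 1) = 2 * n ∧
          w.Sublist (phiList x) ∧ w.Sublist (phiList y)) →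
      0 < |moment v x - moment v y| ∧
        |moment v x - moment v y| < (v ((n : ℤ) + 1) : ℤ) ∧
        ¬ (moment v x ≡ moment v y [ZMOD (v ((n : ℤ) + 1) : ℤ)])) ∧
    (∀ a : ℤ, ∀ x y : Fin n → Fin 4,
      moment v x ≡ a [ZMOD (v ((n : ℤ) + 1) : ℤ)] →
      moment v y ≡ a [ZMOD (v ((n : ℤ) + 1) : ℤ)] →
      phiList x ≠ phiList y →
      ¬ ∃ w : List ℕ, w.length + (s + 1) = 2 * n ∧
          w.Sublist (phiList x) ∧ w.Sublist (phiList y)) := by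
  have hmono : Monotone (wtF v) := wtF_mono hs hv0 hv
  have main : ∀ x y : Fin n → Fin 4, x ≠ y →
      (∃ w : List ℕ, w.length + (s + 1) = 2 * n ∧
          w.Sublist (phiList x) ∧ w.Sublist (phiList y)) →
      0 < |moment v x - moment v y| ∧
        |moment v x - moment v y| < (v ((n : ℤ) + 1) : ℤ) := by
    intro x y hxy hex
    obtain ⟨Zw, hZlen, hZx, hZy⟩ := hex
    have hXlen : (phiList x).reverse.length = 2*n := by
      rw [List.length_reverse, phiList_length]
    have hYlen : (phiList y).reverse.length = 2*n := by
      rw [List.length_reverse, phiList_length]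
    have hZX : Zw.reverse.Sublist (phiList x).reverse := hZx.reverse
    have hZY : Zw.reverse.Sublist (phiList y).reverse := hZy.reverse
    have hZl : Zw.reverse.length = Zw.length := List.length_reverse
    have hbinX : ∀ b ∈ (phiList x).reverse, b ≤ 1 :=
      fun b hb => phiList_mem_le_one x b (List.mem_reverse.mp hb)
    have hbinY : ∀ b ∈ (phiList y).reverse, b ≤ 1 :=
      fun b hb => phiList_mem_le_one y b (List.mem_reverse.mp hb)
    -- moment difference
    have hmx := moment_add_Wt v x
    have hmy := moment_add_Wt v y
    have hdiff : moment v x - moment v y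
        = (Wt (wtF v) (phiList y).reverse : ℤ) - Wt (wtF v) (phiList x).reverse := by
      linarith [hmx, hmy]
    -- magnitude bound
    have habs := abs_bound (wtF v) hmono hbinX hbinY (by omega) hZX hZY
    rw [show (phiList x).reverse.length - Zw.reverse.length = s+1 by omega] at habs
    rw [hXlen] at habs
    have hkey : 1 + topSum (wtF v) (s+1) (2*n) ≤ wtF v (2*n+1) :=
      key_ineq hs hv0 hv (2*n)
    have hwtm : wtF v (2*n+1) = v ((n:ℤ)+1) := wtF_odd v n
    -- sign
    have hne : (phiList x).reverse ≠ (phiList y).reverse := by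
      intro h
      exact hxy (phiList_inj x y (List.reverse_injective h))
    obtain ⟨C, a, b, X₂, Y₂, hXd, hYd, hab, hl2⟩ :=
      exists_first_diff (phiList x).reverse (phiList y).reverse (by omega) hne
    have ha1 : a ≤ 1 := hbinX a (by rw [hXd]; simp)
    have hb1 : b ≤ 1 := hbinY b (by rw [hYd]; simp)
    have hsign : (Wt (wtF v) (phiList x).reverse : ℤ) ≠ Wt (wtF v) (phiList y).reverse := by
      rcases (by omega : (a = 1 ∧ b = 0) ∨ (a = 0 ∧ b = 1)) with ⟨ha, hb⟩ | ⟨ha, hb⟩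
      · subst ha; subst hb
        have hsl := sign_lemma hs hv0 hv C X₂ Y₂ Zw.reverse hl2
          (hXd ▸ hbinX) (hYd ▸ hbinY) (hXd ▸ hZX) (hYd ▸ hZY)
          (by rw [← hXd]; omega)
        rw [← hXd, ← hYd] at hsl
        exact ne_of_gt hsl
      · subst ha; subst hb
        have hsl := sign_lemma hs hv0 hv C Y₂ X₂ Zw.reverse hl2.symm
          (hYd ▸ hbinY) (hXd ▸ hbinX) (hYd ▸ hZY) (hXd ▸ hZX)
          (by rw [← hYd]; omega)
        rw [← hXd, ← hYd] at hsl
        exact ne_of_lt hsl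
    constructor
    · rw [hdiff]
      exact abs_pos.mpr (sub_ne_zero.mpr (Ne.symm hsign))
    · rw [hdiff, abs_sub_comm]
      have hlt : (topSum (wtF v) (s+1) (2*n) : ℤ) < (v ((n:ℤ)+1) : ℤ) := by
        exact_mod_cast (by omega : topSum (wtF v) (s+1) (2*n) < v ((n:ℤ)+1))
      linarith [habs]
  constructor
  · intro x y hxy hex
    obtain ⟨h1, h2⟩ := main x y hxy hex
    refine ⟨h1, h2, ?_⟩
    intro hmod
    have hdvd := Int.ModEq.dvd hmod
    have h0 := Int.eq_zero_of_abs_lt_dvd hdvd (by rw [abs_sub_comm]; exact h2)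
    have he : moment v x - moment v y = 0 := by omega
    rw [he, abs_zero] at h1
    exact lt_irrefl 0 h1
  · intro a x y hx hy hphi hex
    have hxy : x ≠ y := fun e => hphi (by rw [e])
    obtain ⟨h1, h2⟩ := main x y hxy hex
    have hmod : moment v x ≡ moment v y [ZMOD (v ((n : ℤ) + 1) : ℤ)] := hx.trans hy.symm
    have hdvd := Int.ModEq.dvd hmod
    have h0 := Int.eq_zero_of_abs_lt_dvd hdvd (by rw [abs_sub_comm]; exact h2)
    have he : moment v x - moment v y = 0 := by omega
    rw [he, abs_zero] at h1
    exact lt_irrefl 0 h1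
end
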